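/- On ℝⁿ with n ≥ 4, let a(x) = Σ_{j=2}^{n−1} α^j(x¹,…,x^{j+1}) e_j be a drift vector field whose e_j-component is a smooth function of x¹,…,x^{j+1} only (the drift of the extended chained form), and let b₂(x) = e₁ + Σ_{i=2}^{n−1} x^{i+1} e_i. Then for every i with 1 ≤ i ≤ n−3, every k with n−i+1 ≤ k ≤ n, and every x ∈ ℝⁿ, the Lie bracket satisfies [e_k, a](x) ∈ span{b₂(x), eₙ, e_{n−1}, …, e_{n−i}}; that is, the drift satisfies the compatibility condition [a, C(D^{(i)})] ⊆ D^{(i)}. -/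

import Mathlib

/-- `b₂(x) = e₁ + Σ_{i=2}^{n−1} x^{i+1} e_i` (componentwise, 0-based indices). -/
noncomputable def chainedB2 (n : ℕ) : (Fin n → ℝ) → (Fin n → ℝ) :=
  fun x j => if j.val = 0 then 1 else if h : j.val + 1 < n then x ⟨j.val + 1, h⟩ else 0

/-- The derived flag `D^{(i)}(x) = span{b₂(x), eₙ, e_{n−1}, …, e_{n−i}}` at a point `x`. -/
noncomputable def derivedFlag (n i : ℕ) (x : Fin n → ℝ) : Submodule ℝ (Fin n → ℝ) :=
  Submodule.span ℝ (insert (chainedB2 n x)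
    {v : Fin n → ℝ | ∃ m : Fin n, n - 1 - i ≤ m.val ∧ v = Pi.single m 1})

lemma mem_span_singles (n t : ℕ) (v : Fin n → ℝ) (hv : ∀ m : Fin n, m.val < t → v m = 0) :
    v ∈ Submodule.span ℝ {w : Fin n → ℝ | ∃ m : Fin n, t ≤ m.val ∧ w = Pi.single m 1} := by
  have hrep : v = ∑ m : Fin n, v m • (Pi.single m 1 : Fin n → ℝ) := by
    ext j
    simp [Finset.sum_apply, Pi.single_apply]
  rw [hrep]
  apply Submodule.sum_mem
  intro m _
  by_cases hm : m.val < t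
  · rw [hv m hm]; simp
  · exact Submodule.smul_mem _ _ (Submodule.subset_span ⟨m, le_of_not_gt hm, rfl⟩)

theorem stmt3 (n : ℕ) (hn : 4 ≤ n) (a : (Fin n → ℝ) → (Fin n → ℝ))
    (ha_smooth : ContDiff ℝ (⊤ : ℕ∞) a)
    (ha_first : ∀ x : Fin n → ℝ, a x ⟨0, by omega⟩ = 0)
    (ha_last : ∀ x : Fin n → ℝ, a x ⟨n - 1, by omega⟩ = 0)
    (ha_dep : ∀ (x y : Fin n → ℝ) (j : Fin n),
      (∀ m : Fin n, m.val ≤ j.val + 1 → x m = y m) → a x j = a y j)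
    (i : ℕ) (hi1 : 1 ≤ i) (hi2 : i ≤ n - 3)
    (k : Fin n) (hk : n - i ≤ k.val) (x : Fin n → ℝ) :
    VectorField.lieBracket ℝ (fun _ => Pi.single k (1 : ℝ)) a x ∈ derivedFlag n i x := by
  have hdiff : Differentiable ℝ a := ha_smooth.differentiable (by simp)
  have hbr : VectorField.lieBracket ℝ (fun _ => Pi.single k (1 : ℝ)) a x
      = fderiv ℝ a x (Pi.single k 1) := by
    simp [VectorField.lieBracket, fderiv_const]
  rw [hbr]
  apply Submodule.span_mono (Set.subset_insert _ _)
  apply mem_span_singles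
  intro m hm
  -- m.val < n - 1 - i, so m.val + 1 < n - i ≤ k.val
  have hmk : m.val + 1 < k.val := by omega
  -- component m of fderiv a x (e_k)
  have hproj : (fderiv ℝ a x (Pi.single k 1)) m
      = fderiv ℝ (fun y => a y m) x (Pi.single k 1) := by
    have : (fun y => a y m) = (ContinuousLinearMap.proj m (R := ℝ) (φ := fun _ : Fin n => ℝ)) ∘ a := rfl
    rw [this, fderiv_comp (x := x) (ContinuousLinearMap.proj m).differentiableAt (hdiff x)]
    simp
  rw [hproj]
  -- the function y ↦ a y m is constant along the k-direction
  have hconst : ∀ t : ℝ, a (x + t • (Pi.single k 1 : Fin n → ℝ)) m = a x m := by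
    intro t
    apply ha_dep
    intro p hp
    have hpk : p ≠ k := by
      intro h; subst h; omega
    simp [Pi.single_apply, hpk]
  have hd : DifferentiableAt ℝ (fun y => a y m) x :=
    ((ContinuousLinearMap.proj m (R := ℝ) (φ := fun _ : Fin n => ℝ)).differentiableAt).comp x (hdiff x)
  have hline : HasDerivAt (fun t : ℝ => x + t • (Pi.single k 1 : Fin n → ℝ)) (Pi.single k 1) 0 := by
    simpa using (HasDerivAt.const_add x ((hasDerivAt_id (0:ℝ)).smul_const (Pi.single k 1 : Fin n → ℝ)))
  have hcomp : HasDerivAt (fun t : ℝ => a (x + t • (Pi.single k 1 : Fin n → ℝ)) m)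
      (fderiv ℝ (fun y => a y m) x (Pi.single k 1)) 0 := by
    have hd' : HasFDerivAt (fun y => a y m) (fderiv ℝ (fun y => a y m) x)
        (x + (0:ℝ) • (Pi.single k 1 : Fin n → ℝ)) := by
      simpa using hd.hasFDerivAt
    have := hd'.comp_hasDerivAt 0 hline
    exact this
  have hzero : HasDerivAt (fun t : ℝ => a (x + t • (Pi.single k 1 : Fin n → ℝ)) m) 0 0 := by
    have : (fun t : ℝ => a (x + t • (Pi.single k 1 : Fin n → ℝ)) m) = fun _ => a x m := funext hconst
    rw [this]; exact hasDerivAt_const 0 _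
  exact hcomp.unique hzero
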